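/- arXiv:1607.06705 — 3 statements merged into one kernel-verified Lean document; each statement's English description precedes it below -/
import Mathlib

section
/- Let R be an integral domain, ★ a star operation on R, and let J ⊆ I and J' ⊆ I' be nonzero fractional ideals of R. If J is a ★-reduction of I and J' is a ★-reduction of I', then J·J' is a ★-reduction of I·I'. -/
open scoped nonZeroDivisors

/-- A star operation on a domain `R` with fraction field `K`: a map on (nonzero) fractional
ideals satisfying `(xR)^★ = xR`, `(xI)^★ = x I^★`, `I ⊆ I^★`, monotonicity, and idempotency. -/
structure StarOperation (R K : Type*) [CommRing R] [IsDomain R] [Field K] [Algebra R K]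
    [IsFractionRing R K] where
  star : FractionalIdeal R⁰ K → FractionalIdeal R⁰ K
  star_spanSingleton : ∀ x : K, x ≠ 0 →
    star (FractionalIdeal.spanSingleton R⁰ x) = FractionalIdeal.spanSingleton R⁰ x
  star_spanSingleton_mul : ∀ (x : K) (I : FractionalIdeal R⁰ K), x ≠ 0 → I ≠ 0 →
    star (FractionalIdeal.spanSingleton R⁰ x * I) = FractionalIdeal.spanSingleton R⁰ x * star I
  le_star : ∀ I : FractionalIdeal R⁰ K, I ≠ 0 → I ≤ star I
  star_mono : ∀ I J : FractionalIdeal R⁰ K, I ≠ 0 → I ≤ J → star I ≤ star J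
  star_star : ∀ I : FractionalIdeal R⁰ K, I ≠ 0 → star (star I) = star I

/-- `J` is a `★`-reduction of `I` if `(J · I^n)^★ = (I^(n+1))^★` for some integer `n ≥ 0`. -/
def IsStarReduction {R K : Type*} [CommRing R] [IsDomain R] [Field K] [Algebra R K]
    [IsFractionRing R K] (s : StarOperation R K) (J I : FractionalIdeal R⁰ K) : Prop :=
  ∃ n : ℕ, s.star (J * I ^ n) = s.star (I ^ (n + 1))


lemma FI.mul_ne_zero' {R K : Type*} [CommRing R] [IsDomain R] [Field K] [Algebra R K]
    [IsFractionRing R K] {A B : FractionalIdeal R⁰ K} (hA : A ≠ 0) (hB : B ≠ 0) :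
    A * B ≠ 0 := by
  obtain ⟨a, ha, ha0⟩ : ∃ a ∈ A, a ≠ 0 := by
    by_contra hc; push_neg at hc
    exact hA (FractionalIdeal.eq_zero_iff.mpr hc)
  obtain ⟨b, hb, hb0⟩ : ∃ b ∈ B, b ≠ 0 := by
    by_contra hc; push_neg at hc
    exact hB (FractionalIdeal.eq_zero_iff.mpr hc)
  intro hAB
  exact mul_ne_zero ha0 hb0 (FractionalIdeal.eq_zero_iff.mp hAB _
    (FractionalIdeal.mul_mem_mul ha hb))

lemma FI.pow_ne_zero' {R K : Type*} [CommRing R] [IsDomain R] [Field K] [Algebra R K]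
    [IsFractionRing R K] {A : FractionalIdeal R⁰ K} (hA : A ≠ 0) (n : ℕ) :
    A ^ n ≠ 0 := by
  induction n with
  | zero => simpa using one_ne_zero
  | succ k ih => rw [pow_succ]; exact FI.mul_ne_zero' ih hA

section Key
variable {R K : Type*} [CommRing R] [IsDomain R] [Field K] [Algebra R K] [IsFractionRing R K]
  (s : StarOperation R K)

lemma FI.star_ne_zero {A : FractionalIdeal R⁰ K} (hA : A ≠ 0) : s.star A ≠ 0 := fun h =>
  hA (le_antisymm (h ▸ s.le_star A hA) (FractionalIdeal.zero_le _))

lemma FI.star_mul_left {A B : FractionalIdeal R⁰ K} (hA : A ≠ 0) (hB : B ≠ 0) :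
    s.star (s.star A * B) = s.star (A * B) := by
  apply le_antisymm
  · have h1 : s.star A * B ≤ s.star (A * B) := by
      rw [FractionalIdeal.mul_le]
      intro a ha b hb
      rcases eq_or_ne b 0 with rfl | hb0
      · simpa using (s.star (A * B)).zero_mem
      have h2 : FractionalIdeal.spanSingleton R⁰ b * s.star A ≤ s.star (A * B) := by
        rw [← s.star_spanSingleton_mul b A hb0 hA]
        calc s.star (FractionalIdeal.spanSingleton R⁰ b * A)
            ≤ s.star (s.star (A * B)) := by
              apply s.star_mono _ _ (FI.mul_ne_zero' (by
                simpa [FractionalIdeal.spanSingleton_eq_zero_iff] using hb0) hA)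
              calc FractionalIdeal.spanSingleton R⁰ b * A ≤ B * A :=
                    mul_le_mul_left (by
                      rw [FractionalIdeal.spanSingleton_le_iff_mem]; exact hb) A
                _ = A * B := mul_comm _ _
                _ ≤ s.star (A * B) := s.le_star _ (FI.mul_ne_zero' hA hB)
          _ = s.star (A * B) := s.star_star _ (FI.mul_ne_zero' hA hB)
      have : a * b ∈ FractionalIdeal.spanSingleton R⁰ b * s.star A := by
        rw [mul_comm a b]
        exact FractionalIdeal.mul_mem_mul (FractionalIdeal.mem_spanSingleton_self _ _) ha
      exact h2 this
    calc s.star (s.star A * B) ≤ s.star (s.star (A * B)) :=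
          s.star_mono _ _ (FI.mul_ne_zero' (FI.star_ne_zero s hA) hB) h1
      _ = s.star (A * B) := s.star_star _ (FI.mul_ne_zero' hA hB)
  · exact s.star_mono _ _ (FI.mul_ne_zero' hA hB)
      (mul_le_mul_left (s.le_star A hA) B)

end Key

/-- If `J` is a `★`-reduction of `I` and `J'` is a `★`-reduction of `I'`, then `J·J'` is a
`★`-reduction of `I·I'`. -/
theorem starReduction_mul (R K : Type*) [CommRing R] [IsDomain R] [Field K] [Algebra R K]
    [IsFractionRing R K] (s : StarOperation R K) (J I J' I' : FractionalIdeal R⁰ K)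
    (hJ0 : J ≠ 0) (hI0 : I ≠ 0) (hJ'0 : J' ≠ 0) (hI'0 : I' ≠ 0)
    (hJI : J ≤ I) (hJ'I' : J' ≤ I')
    (h : IsStarReduction s J I) (h' : IsStarReduction s J' I') :
    IsStarReduction s (J * J') (I * I') := by
  obtain ⟨n, hn⟩ := h
  obtain ⟨m, hm⟩ := h'
  refine ⟨n + m, ?_⟩
  have hZ : I ^ m * I' ^ n ≠ 0 :=
    FI.mul_ne_zero' (FI.pow_ne_zero' hI0 m) (FI.pow_ne_zero' hI'0 n)
  have hY : J' * I' ^ m ≠ 0 := FI.mul_ne_zero' hJ'0 (FI.pow_ne_zero' hI'0 m)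
  have hX : J * I ^ n ≠ 0 := FI.mul_ne_zero' hJ0 (FI.pow_ne_zero' hI0 n)
  have hYZ : J' * I' ^ m * (I ^ m * I' ^ n) ≠ 0 := FI.mul_ne_zero' hY hZ
  have hIn1 : I ^ (n + 1) ≠ 0 := FI.pow_ne_zero' hI0 (n + 1)
  have hIm1 : I' ^ (m + 1) ≠ 0 := FI.pow_ne_zero' hI'0 (m + 1)
  have hIZ : I ^ (n + 1) * (I ^ m * I' ^ n) ≠ 0 := FI.mul_ne_zero' hIn1 hZ
  calc s.star (J * J' * (I * I') ^ (n + m))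
      = s.star ((J * I ^ n) * ((J' * I' ^ m) * (I ^ m * I' ^ n))) := by ring_nf
    _ = s.star (s.star (J * I ^ n) * ((J' * I' ^ m) * (I ^ m * I' ^ n))) :=
        (FI.star_mul_left s hX hYZ).symm
    _ = s.star (s.star (I ^ (n + 1)) * ((J' * I' ^ m) * (I ^ m * I' ^ n))) := by rw [hn]
    _ = s.star (I ^ (n + 1) * ((J' * I' ^ m) * (I ^ m * I' ^ n))) :=
        FI.star_mul_left s hIn1 hYZ
    _ = s.star ((J' * I' ^ m) * (I ^ (n + 1) * (I ^ m * I' ^ n))) := by ring_nf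
    _ = s.star (s.star (J' * I' ^ m) * (I ^ (n + 1) * (I ^ m * I' ^ n))) :=
        (FI.star_mul_left s hY hIZ).symm
    _ = s.star (s.star (I' ^ (m + 1)) * (I ^ (n + 1) * (I ^ m * I' ^ n))) := by rw [hm]
    _ = s.star (I' ^ (m + 1) * (I ^ (n + 1) * (I ^ m * I' ^ n))) :=
        FI.star_mul_left s hIm1 hIZ
    _ = s.star ((I * I') ^ (n + m + 1)) := by ring_nf
end

section
/- Let R be an integral domain, ★ a star operation on R, and let J ⊆ I and J' ⊆ I' be nonzero fractional ideals of R. If J is a ★-reduction of I and J' is a ★-reduction of I', then J + J' is a ★-reduction of I + I'. -/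
open scoped nonZeroDivisors

open scoped nonZeroDivisors
open FractionalIdeal

section Aux
variable {R K : Type*} [CommRing R] [IsDomain R] [Field K] [Algebra R K] [IsFractionRing R K]

lemma FI.exists_ne_zero {A : FractionalIdeal R⁰ K} (hA : A ≠ 0) : ∃ a ∈ A, a ≠ (0 : K) := by
  by_contra hc; push_neg at hc; exact hA (FractionalIdeal.eq_zero_iff.mpr hc)

instance : NoZeroDivisors (FractionalIdeal R⁰ K) := by
  constructor
  intro A B h
  by_contra hc
  push_neg at hc
  obtain ⟨a, haA, ha⟩ := FI.exists_ne_zero hc.1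
  obtain ⟨b, hbB, hb⟩ := FI.exists_ne_zero hc.2
  have : a * b = 0 := FractionalIdeal.eq_zero_iff.mp h _ (FractionalIdeal.mul_mem_mul haA hbB)
  exact mul_ne_zero ha hb this

lemma FI.le_add_left (A B : FractionalIdeal R⁰ K) : A ≤ A + B := by
  rw [← FractionalIdeal.sup_eq_add]; exact le_sup_left

lemma FI.le_add_right (A B : FractionalIdeal R⁰ K) : B ≤ A + B := by
  rw [← FractionalIdeal.sup_eq_add]; exact le_sup_right

lemma FI.mul_le_mul {A B C D : FractionalIdeal R⁰ K} (h1 : A ≤ B) (h2 : C ≤ D) :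
    A * C ≤ B * D :=
  (mul_le_mul_of_nonneg_left h2 (FractionalIdeal.zero_le A)).trans
    (mul_le_mul_of_nonneg_right h1 (FractionalIdeal.zero_le D))

lemma FI.pow_le_pow {A B : FractionalIdeal R⁰ K} (h : A ≤ B) (n : ℕ) : A ^ n ≤ B ^ n := by
  induction n with
  | zero => simp
  | succ n ih => rw [pow_succ, pow_succ]; exact FI.mul_le_mul ih h

lemma FI.natCast_le_one (c : ℕ) : (c : FractionalIdeal R⁰ K) ≤ 1 := by
  induction c with
  | zero => exact FractionalIdeal.zero_le _
  | succ c ih => push_cast; rw [← FractionalIdeal.sup_eq_add]; exact sup_le ih le_rfl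

lemma FI.sum_le {ι : Type*} (t : Finset ι) (f : ι → FractionalIdeal R⁰ K)
    (X : FractionalIdeal R⁰ K) (hX : ∀ i ∈ t, f i ≤ X) : ∑ i ∈ t, f i ≤ X := by
  classical
  induction t using Finset.induction with
  | empty => exact FractionalIdeal.zero_le _
  | insert _ _ h ih =>
    rw [Finset.sum_insert h, ← FractionalIdeal.sup_eq_add]
    exact sup_le (hX _ (Finset.mem_insert_self _ _))
      (ih fun i hi => hX i (Finset.mem_insert_of_mem hi))

end Aux

section Star
variable {R K : Type*} [CommRing R] [IsDomain R] [Field K] [Algebra R K] [IsFractionRing R K]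

lemma FI.ne_zero_of_le {A B : FractionalIdeal R⁰ K} (hA : A ≠ 0) (h : A ≤ B) : B ≠ 0 := by
  intro h0
  exact hA (le_antisymm (h0 ▸ h) (FractionalIdeal.zero_le _))

lemma sStar_ne_zero (s : StarOperation R K) {A : FractionalIdeal R⁰ K} (hA : A ≠ 0) :
    s.star A ≠ 0 :=
  FI.ne_zero_of_le hA (s.le_star A hA)

lemma star_mul_le (s : StarOperation R K) {A B : FractionalIdeal R⁰ K} (hA : A ≠ 0) :
    s.star A * B ≤ s.star (A * B) := by
  rw [mul_comm (s.star A) B]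
  refine FractionalIdeal.mul_le.mpr fun b hb a ha => ?_
  by_cases hb0 : b = (0 : K)
  · subst hb0; rw [zero_mul]; exact FractionalIdeal.zero_mem _
  · have hAB : FractionalIdeal.spanSingleton R⁰ b * A ≤ A * B := by
      rw [mul_comm (FractionalIdeal.spanSingleton R⁰ b) A]
      exact mul_le_mul_of_nonneg_left
        (FractionalIdeal.spanSingleton_le_iff_mem.mpr hb) (FractionalIdeal.zero_le A)
    have hne : FractionalIdeal.spanSingleton R⁰ b * A ≠ 0 :=
      mul_ne_zero (FractionalIdeal.spanSingleton_ne_zero_iff.mpr hb0) hA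
    have h2 := s.star_mono _ _ hne hAB
    rw [s.star_spanSingleton_mul b A hb0 hA] at h2
    exact h2 (FractionalIdeal.mul_mem_mul
      (FractionalIdeal.mem_spanSingleton_self R⁰ b) ha)

/-- Key step: if `(J I^n)^★ = (I^(n+1))^★` and `J I^n C ≤ T`, then `I^(n+1) C ≤ T^★`. -/
lemma key_step (s : StarOperation R K) {J I C T : FractionalIdeal R⁰ K} {n : ℕ}
    (hJ0 : J ≠ 0) (hI0 : I ≠ 0) (hC : C ≠ 0) (hT0 : T ≠ 0)
    (hn : s.star (J * I ^ n) = s.star (I ^ (n + 1)))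
    (hle : J * I ^ n * C ≤ T) : I ^ (n + 1) * C ≤ s.star T := by
  have hJIn : J * I ^ n ≠ 0 := mul_ne_zero hJ0 (pow_ne_zero n hI0)
  calc I ^ (n + 1) * C ≤ s.star (I ^ (n + 1)) * C :=
        mul_le_mul_of_nonneg_right (s.le_star _ (pow_ne_zero _ hI0)) (FractionalIdeal.zero_le C)
    _ = s.star (J * I ^ n) * C := by rw [hn]
    _ ≤ s.star (J * I ^ n * C) := star_mul_le s hJIn
    _ ≤ s.star T := s.star_mono _ _ (mul_ne_zero hJIn hC) hle

end Star

/-- If `J` is a `★`-reduction of `I` and `J'` is a `★`-reduction of `I'`, then `J + J'` is a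
`★`-reduction of `I + I'`. -/
theorem starReduction_add (R K : Type*) [CommRing R] [IsDomain R] [Field K] [Algebra R K]
    [IsFractionRing R K] (s : StarOperation R K) (J I J' I' : FractionalIdeal R⁰ K)
    (hJ0 : J ≠ 0) (hI0 : I ≠ 0) (hJ'0 : J' ≠ 0) (hI'0 : I' ≠ 0)
    (hJI : J ≤ I) (hJ'I' : J' ≤ I')
    (h : IsStarReduction s J I) (h' : IsStarReduction s J' I') :
    IsStarReduction s (J + J') (I + I') := by
  obtain ⟨n, hn⟩ := h
  obtain ⟨n', hn'⟩ := h'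
  set N : ℕ := n + n' + 1 with hN
  refine ⟨N, ?_⟩
  have hS0 : I + I' ≠ 0 := FI.ne_zero_of_le hI0 (FI.le_add_left I I')
  have hJJ0 : J + J' ≠ 0 := FI.ne_zero_of_le hJ0 (FI.le_add_left J J')
  have hT0 : (J + J') * (I + I') ^ N ≠ 0 := mul_ne_zero hJJ0 (pow_ne_zero _ hS0)
  have hIle : I ≤ I + I' := FI.le_add_left I I'
  have hI'le : I' ≤ I + I' := FI.le_add_right I I'
  have hJJle : J + J' ≤ I + I' := by
    rw [← FractionalIdeal.sup_eq_add]
    exact sup_le (hJI.trans hIle) (hJ'I'.trans hI'le)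
  apply le_antisymm
  · apply s.star_mono _ _ hT0
    conv_rhs => rw [pow_succ']
    exact FI.mul_le_mul hJJle le_rfl
  · -- main direction
    have hcore : (I + I') ^ (N + 1) ≤ s.star ((J + J') * (I + I') ^ N) := by
      rw [add_pow]
      apply FI.sum_le
      intro k hk
      rw [Finset.mem_range] at hk
      have hk' : k ≤ N + 1 := by omega
      have hterm : I ^ k * I' ^ (N + 1 - k) * ((N + 1).choose k : FractionalIdeal R⁰ K)
          ≤ I ^ k * I' ^ (N + 1 - k) := by
        calc I ^ k * I' ^ (N + 1 - k) * ((N + 1).choose k : FractionalIdeal R⁰ K)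
            ≤ I ^ k * I' ^ (N + 1 - k) * 1 := FI.mul_le_mul le_rfl (FI.natCast_le_one _)
          _ = I ^ k * I' ^ (N + 1 - k) := by rw [mul_one]
      refine hterm.trans ?_
      by_cases hkn : n + 1 ≤ k
      · -- use the reduction for I
        set d : ℕ := k - (n + 1) with hd
        set e : ℕ := N + 1 - k with he
        have hkeq : k = (n + 1) + d := by omega
        have hsplit : I ^ k * I' ^ e = I ^ (n + 1) * (I ^ d * I' ^ e) := by
          rw [hkeq, pow_add, mul_assoc]
        rw [hsplit]
        apply key_step s hJ0 hI0 (mul_ne_zero (pow_ne_zero _ hI0) (pow_ne_zero _ hI'0)) hT0 hn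
        have hBle : I ^ n * (I ^ d * I' ^ e) ≤ (I + I') ^ N := by
          have : I ^ n * (I ^ d * I' ^ e) ≤ (I + I') ^ n * ((I + I') ^ d * (I + I') ^ e) :=
            FI.mul_le_mul (FI.pow_le_pow hIle n)
              (FI.mul_le_mul (FI.pow_le_pow hIle d) (FI.pow_le_pow hI'le e))
          refine this.trans ?_
          rw [← pow_add, ← pow_add]
          have : n + (d + e) = N := by omega
          rw [this]
        calc J * I ^ n * (I ^ d * I' ^ e) = J * (I ^ n * (I ^ d * I' ^ e)) := by
              rw [mul_assoc]
          _ ≤ (J + J') * (I + I') ^ N := FI.mul_le_mul (FI.le_add_left J J') hBle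
      · -- use the reduction for I'
        set e : ℕ := N + 1 - k with he
        have hen : n' + 1 ≤ e := by omega
        set d : ℕ := e - (n' + 1) with hd
        have heeq : e = (n' + 1) + d := by omega
        have hsplit : I ^ k * I' ^ e = I' ^ (n' + 1) * (I' ^ d * I ^ k) := by
          rw [heeq, pow_add]; ring
        rw [hsplit]
        apply key_step s hJ'0 hI'0 (mul_ne_zero (pow_ne_zero _ hI'0) (pow_ne_zero _ hI0)) hT0 hn'
        have hBle : I' ^ n' * (I' ^ d * I ^ k) ≤ (I + I') ^ N := by
          have : I' ^ n' * (I' ^ d * I ^ k) ≤ (I + I') ^ n' * ((I + I') ^ d * (I + I') ^ k) :=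
            FI.mul_le_mul (FI.pow_le_pow hI'le n')
              (FI.mul_le_mul (FI.pow_le_pow hI'le d) (FI.pow_le_pow hIle k))
          refine this.trans ?_
          rw [← pow_add, ← pow_add]
          have : n' + (d + k) = N := by omega
          rw [this]
        calc J' * I' ^ n' * (I' ^ d * I ^ k) = J' * (I' ^ n' * (I' ^ d * I ^ k)) := by
              rw [mul_assoc]
          _ ≤ (J + J') * (I + I') ^ N := FI.mul_le_mul (FI.le_add_right J J') hBle
    calc s.star ((I + I') ^ (N + 1))
        ≤ s.star (s.star ((J + J') * (I + I') ^ N)) :=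
          s.star_mono _ _ (pow_ne_zero _ hS0) hcore
      _ = s.star ((J + J') * (I + I') ^ N) := s.star_star _ hT0
end

section
/- Let R be a domain with the finite t-basic ideal property. Then every nonzero finitely generated ideal of R is v-basic: if I is a nonzero finitely generated ideal and J ⊆ I with (J·I^n)_v = (I^(n+1))_v for some n ≥ 0, then J_v = I_v. -/
open scoped nonZeroDivisors

/-- The `v`-operation (divisorial closure) on `R`-submodules of the fraction field `K`:
`I_v = (I⁻¹)⁻¹` where `I⁻¹ = (R : I) = 1 / I`. -/
noncomputable def vS (R K : Type*) [CommRing R] [Field K] [Algebra R K]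
    (I : Submodule R K) : Submodule R K := 1 / (1 / I)

/-- The `t`-operation: `I_t = ⋃ J_v` where `J` ranges over nonzero finitely generated
sub-ideals of `I`. -/
noncomputable def tS (R K : Type*) [CommRing R] [Field K] [Algebra R K]
    (I : Submodule R K) : Submodule R K :=
  ⨆ J ∈ {J : Submodule R K | J ≠ ⊥ ∧ J.FG ∧ J ≤ I}, vS R K J

/-- The image of an ideal of `R` in the fraction field `K`, as an `R`-submodule. -/
noncomputable def idealToSub (R K : Type*) [CommRing R] [Field K] [Algebra R K]
    (I : Ideal R) : Submodule R K := Submodule.map (Algebra.linearMap R K) I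

/-- The `t`-closure of an ideal of `R`, computed in the fraction field `K`. -/
noncomputable def tI (R K : Type*) [CommRing R] [Field K] [Algebra R K]
    (I : Ideal R) : Submodule R K := tS R K (idealToSub R K I)

/-- The `v`-closure of an ideal of `R`, computed in the fraction field `K`. -/
noncomputable def vI (R K : Type*) [CommRing R] [Field K] [Algebra R K]
    (I : Ideal R) : Submodule R K := vS R K (idealToSub R K I)

section Aux

variable {R K : Type*} [CommRing R] [Field K] [Algebra R K]

lemma oneDiv_anti {X Y : Submodule R K} (h : X ≤ Y) : 1 / Y ≤ 1 / X := by
  intro z hz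
  rw [Submodule.mem_div_iff_forall_mul_mem] at hz ⊢
  exact fun w hw => hz w (h hw)

lemma vS_mono {X Y : Submodule R K} (h : X ≤ Y) : vS R K X ≤ vS R K Y :=
  oneDiv_anti (oneDiv_anti h)

lemma le_vS (X : Submodule R K) : X ≤ vS R K X := by
  intro x hx
  rw [vS, Submodule.mem_div_iff_forall_mul_mem]
  intro z hz
  rw [Submodule.mem_div_iff_forall_mul_mem] at hz
  rw [mul_comm]
  exact hz x hx

lemma vS_idem (X : Submodule R K) : vS R K (vS R K X) = vS R K X := by
  refine le_antisymm ?_ (le_vS _)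
  show 1 / (1 / (1 / (1 / X))) ≤ 1 / (1 / X)
  exact oneDiv_anti (le_vS (1 / X))

lemma one_mul_one_mem {x y : K} (hx : x ∈ (1 : Submodule R K))
    (hy : y ∈ (1 : Submodule R K)) : x * y ∈ (1 : Submodule R K) := by
  rw [Submodule.mem_one] at hx hy ⊢
  obtain ⟨a, rfl⟩ := hx
  obtain ⟨b, rfl⟩ := hy
  exact ⟨a * b, by rw [map_mul]⟩

lemma vS_span_singleton {c : K} (hc : c ≠ 0) :
    vS R K (Submodule.span R {c}) = Submodule.span R {c} := by
  refine le_antisymm ?_ (le_vS _)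
  intro w hw
  rw [vS, Submodule.mem_div_iff_forall_mul_mem] at hw
  have hcinv : c⁻¹ ∈ (1 : Submodule R K) / Submodule.span R {c} := by
    rw [Submodule.mem_div_iff_forall_mul_mem]
    intro u hu
    obtain ⟨r, rfl⟩ := Submodule.mem_span_singleton.mp hu
    have : c⁻¹ * (r • c) = algebraMap R K r := by
      rw [Algebra.smul_def]
      field_simp
    rw [this]
    exact Submodule.mem_one.mpr ⟨r, rfl⟩
  have := hw _ hcinv
  rw [Submodule.mem_one] at this
  obtain ⟨r, hr⟩ := this
  have hwc : w = algebraMap R K r * c := by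
    rw [hr, mul_assoc, inv_mul_cancel₀ hc, mul_one]
  rw [hwc, ← Algebra.smul_def]
  exact Submodule.smul_mem _ _ (Submodule.mem_span_singleton_self c)

lemma pow_mono {X Y : Submodule R K} (h : X ≤ Y) (m : ℕ) : X ^ m ≤ Y ^ m := by
  induction m with
  | zero => simp
  | succ k ih =>
      rw [pow_succ, pow_succ]
      exact mul_le_mul' ih h

lemma sup_pow_le (P B : Submodule R K) (m : ℕ) :
    (P ⊔ B) ^ (m + 1) ≤ P * (P ⊔ B) ^ m ⊔ B ^ (m + 1) := by
  induction m with
  | zero => simp [mul_comm]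
  | succ k ih =>
      have : (P ⊔ B) ^ (k + 2) = (P ⊔ B) ^ (k + 1) * (P ⊔ B) := by ring
      rw [this]
      calc (P ⊔ B) ^ (k + 1) * (P ⊔ B)
          ≤ (P * (P ⊔ B) ^ k ⊔ B ^ (k + 1)) * (P ⊔ B) :=
            mul_le_mul' ih le_rfl
        _ ≤ P * (P ⊔ B) ^ (k + 1) ⊔ B ^ (k + 2) := by
            rw [Submodule.sup_mul]
            apply sup_le
            · have : P * (P ⊔ B) ^ k * (P ⊔ B) = P * ((P ⊔ B) ^ k * (P ⊔ B)) := by ring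
              rw [this, ← pow_succ]
              exact le_sup_left
            · rw [Submodule.mul_sup]
              apply sup_le
              · calc B ^ (k + 1) * P = P * B ^ (k + 1) := by ring
                  _ ≤ P * (P ⊔ B) ^ (k + 1) := mul_le_mul' le_rfl (pow_mono le_sup_right _)
                  _ ≤ _ := le_sup_left
              · rw [← pow_succ]
                exact le_sup_right

end Aux


section Aux2


variable {R K : Type*} [CommRing R] [Field K] [Algebra R K]

lemma linmap_eq : Algebra.linearMap R K = (Algebra.ofId R K).toLinearMap := rfl

lemma idealToSub_mul (A B : Ideal R) :
    idealToSub R K (A * B) = idealToSub R K A * idealToSub R K B := by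
  unfold idealToSub
  rw [linmap_eq]
  exact Submodule.map_mul A B (Algebra.ofId R K)

lemma idealToSub_top : idealToSub R K ⊤ = 1 := by
  unfold idealToSub
  rw [Submodule.map_top, Submodule.one_eq_range]

lemma idealToSub_pow (A : Ideal R) (m : ℕ) :
    idealToSub R K (A ^ m) = idealToSub R K A ^ m := by
  induction m with
  | zero => simpa using idealToSub_top
  | succ k ih => rw [pow_succ, pow_succ, idealToSub_mul, ih]

lemma idealToSub_sup (A B : Ideal R) :
    idealToSub R K (A ⊔ B) = idealToSub R K A ⊔ idealToSub R K B :=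
  Submodule.map_sup _ _ _

lemma idealToSub_span_singleton (p : R) :
    idealToSub R K (Ideal.span {p}) = Submodule.span R {algebraMap R K p} := by
  unfold idealToSub
  rw [Ideal.span, Submodule.map_span, Set.image_singleton, Algebra.linearMap_apply]

variable [IsDomain R] [IsFractionRing R K]

lemma idealToSub_ne_bot {A : Ideal R} (hA : A ≠ 0) : idealToSub R K A ≠ ⊥ := by
  obtain ⟨a, ha, ha0⟩ := Submodule.exists_mem_ne_zero_of_ne_bot hA
  intro h
  have : algebraMap R K a ∈ idealToSub R K A := ⟨a, ha, rfl⟩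
  rw [h, Submodule.mem_bot] at this
  exact ha0 (IsFractionRing.injective R K (by simpa using this))

lemma tI_eq_vI {A : Ideal R} (hA : A ≠ 0) (hfg : A.FG) : tI R K A = vI R K A := by
  unfold tI vI tS
  apply le_antisymm
  · refine iSup₂_le ?_
    rintro X ⟨-, -, hle⟩
    show 1 / (1 / X) ≤ _
    exact oneDiv_anti (oneDiv_anti hle)
  · refine le_iSup₂_of_le (idealToSub R K A)
      ⟨idealToSub_ne_bot hA, Submodule.FG.map (Algebra.linearMap R K) hfg, le_rfl⟩ le_rfl

end Aux2


section MainAux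

variable {R K : Type*} [CommRing R] [Field K] [Algebra R K]

lemma span_singleton_pow' (c : K) (m : ℕ) :
    (Submodule.span R {c}) ^ m = Submodule.span R {c ^ m} := by
  induction m with
  | zero => rw [pow_zero, pow_zero, Submodule.one_eq_span]
  | succ k ih =>
      rw [pow_succ, ih, Submodule.span_mul_span, Set.singleton_mul_singleton, ← pow_succ]

variable [IsDomain R]

lemma ideal_mul_ne_bot {A B : Ideal R} (hA : A ≠ 0) (hB : B ≠ 0) : A * B ≠ 0 := by
  obtain ⟨a, haA, ha0⟩ := Submodule.exists_mem_ne_zero_of_ne_bot hA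
  obtain ⟨b, hbB, hb0⟩ := Submodule.exists_mem_ne_zero_of_ne_bot hB
  intro h
  have hm : a * b ∈ A * B := Ideal.mul_mem_mul haA hbB
  rw [h] at hm
  exact mul_ne_zero ha0 hb0 ((Submodule.mem_bot R).mp hm)

lemma ideal_pow_ne_bot {A : Ideal R} (hA : A ≠ 0) (m : ℕ) : A ^ m ≠ 0 := by
  induction m with
  | zero =>
      rw [pow_zero]
      intro h
      have h1 : (1 : R) ∈ (1 : Ideal R) := Submodule.one_le.mp le_rfl
      rw [h] at h1
      exact one_ne_zero ((Submodule.mem_bot R).mp h1)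
  | succ k ih => rw [pow_succ]; exact ideal_mul_ne_bot ih hA

end MainAux

/-- If `R` has the finite `t`-basic ideal property, then every nonzero finitely generated
ideal of `R` is `v`-basic. -/
theorem v_basic_of_finite_t_basic (R K : Type*) [CommRing R] [IsDomain R]
    [Field K] [Algebra R K] [IsFractionRing R K]
    (hbasic : ∀ I : Ideal R, I ≠ 0 → I.FG → ∀ J : Ideal R, J ≠ 0 → J ≤ I →
      (∃ n : ℕ, tI R K (J * I ^ n) = tI R K (I ^ (n + 1))) → tI R K J = tI R K I)
    (I : Ideal R) (hI0 : I ≠ 0) (hIfg : I.FG) (J : Ideal R) (hJ0 : J ≠ 0) (hJI : J ≤ I)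
    (hred : ∃ n : ℕ, vI R K (J * I ^ n) = vI R K (I ^ (n + 1))) :
    vI R K J = vI R K I := by
  obtain ⟨n, hn⟩ := hred
  have hredK : vS R K (idealToSub R K J * idealToSub R K I ^ n)
      = vS R K (idealToSub R K I ^ (n + 1)) := by
    have h := hn
    unfold vI at h
    rwa [idealToSub_mul, idealToSub_pow, idealToSub_pow] at h
  set I' : Submodule R K := idealToSub R K I with hI'def
  set J' : Submodule R K := idealToSub R K J with hJ'def
  have hdiv : (1 : Submodule R K) / J' ≤ (1 : Submodule R K) / I' := by
    intro y hy
    rw [Submodule.mem_div_iff_forall_mul_mem] at hy ⊢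
    intro x hx
    obtain ⟨q, p, hp, hyqp⟩ := IsFractionRing.div_surjective (A := R) y
    have hp0 : p ≠ 0 := nonZeroDivisors.ne_zero hp
    set p' : K := algebraMap R K p with hp'def
    set q' : K := algebraMap R K q with hq'def
    have hp'0 : p' ≠ 0 :=
      IsFractionRing.to_map_ne_zero_of_mem_nonZeroDivisors hp
    have hy' : y * p' = q' := by
      rw [← hyqp]; field_simp
    set P : Submodule R K := Submodule.span R {p'} with hPdef
    set Qq : Submodule R K := Submodule.span R {q'} with hQqdef
    set B : Submodule R K := Qq * I' with hBdef
    set Ebar : Submodule R K := P ⊔ B with hEbardef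
    -- Step G2
    have hG2 : ∀ z ∈ I' ^ (n + 1), y * z ∈ vS R K (I' ^ n) := by
      intro z hz
      have hzv : z ∈ vS R K (J' * I' ^ n) := by
        rw [hredK]
        exact le_vS _ hz
      rw [vS, Submodule.mem_div_iff_forall_mul_mem]
      intro w hw
      have hyw : y * w ∈ (1 : Submodule R K) / (J' * I' ^ n) := by
        rw [Submodule.mem_div_iff_forall_mul_mem]
        intro t ht
        refine Submodule.mul_induction_on ht (fun a ha b hb => ?_)
          (fun t1 t2 h1 h2 => by rw [mul_add]; exact add_mem h1 h2)
        have h1 : y * a ∈ (1 : Submodule R K) := hy a ha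
        have h2 : w * b ∈ (1 : Submodule R K) :=
          Submodule.mem_div_iff_forall_mul_mem.mp hw b hb
        have heq : y * w * (a * b) = y * a * (w * b) := by ring
        rw [heq]
        exact one_mul_one_mem h1 h2
      have h3 := Submodule.mem_div_iff_forall_mul_mem.mp hzv (y * w) hyw
      rwa [show z * (y * w) = y * z * w by ring] at h3
    -- Step G1
    have hG1 : B ^ (n + 1) ≤ vS R K (P * B ^ n) := by
      have hBpow : B ^ (n + 1) = Submodule.span R {q' ^ (n + 1)} * I' ^ (n + 1) := by
        rw [hBdef, mul_pow, span_singleton_pow']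
      rw [hBpow]
      intro t ht
      refine Submodule.mul_induction_on ht (fun s hs x hx' => ?_)
        (fun t1 t2 h1 h2 => add_mem h1 h2)
      obtain ⟨r, rfl⟩ := Submodule.mem_span_singleton.mp hs
      rw [smul_mul_assoc]
      refine Submodule.smul_mem _ _ ?_
      have hxy : y * x ∈ vS R K (I' ^ n) := hG2 x hx'
      rw [vS, Submodule.mem_div_iff_forall_mul_mem]
      intro z hz
      have hz' : z * (p' * q' ^ n) ∈ (1 : Submodule R K) / I' ^ n := by
        rw [Submodule.mem_div_iff_forall_mul_mem]
        intro t' ht'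
        have hmem : p' * (q' ^ n * t') ∈ P * B ^ n := by
          refine Submodule.mul_mem_mul (Submodule.mem_span_singleton_self p') ?_
          rw [hBdef, mul_pow]
          exact Submodule.mul_mem_mul
            (Submodule.pow_mem_pow _ (Submodule.mem_span_singleton_self q') n) ht'
        have h4 := Submodule.mem_div_iff_forall_mul_mem.mp hz _ hmem
        rwa [show z * (p' * (q' ^ n * t')) = z * (p' * q' ^ n) * t' by ring] at h4
      have h5 := Submodule.mem_div_iff_forall_mul_mem.mp hxy _ hz'
      have heq2 : q' ^ (n + 1) * x * z = y * x * (z * (p' * q' ^ n)) := by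
        rw [← hy']; ring
      rwa [heq2]
    -- K-level premise
    have hEK : vS R K (P * Ebar ^ n) = vS R K (Ebar ^ (n + 1)) := by
      apply le_antisymm
      · apply vS_mono
        calc P * Ebar ^ n ≤ Ebar * Ebar ^ n := mul_le_mul' le_sup_left le_rfl
          _ = Ebar ^ (n + 1) := (pow_succ' Ebar n).symm
      · have hsub : Ebar ^ (n + 1) ≤ vS R K (P * Ebar ^ n) := by
          refine le_trans (sup_pow_le P B n) (sup_le ?_ ?_)
          · exact le_vS _
          · refine le_trans hG1 (vS_mono ?_)
            exact mul_le_mul' le_rfl (pow_mono le_sup_right n)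
        calc vS R K (Ebar ^ (n + 1)) ≤ vS R K (vS R K (P * Ebar ^ n)) := vS_mono hsub
          _ = vS R K (P * Ebar ^ n) := vS_idem _
    -- ideal level
    set E : Ideal R := Ideal.span {p} ⊔ Ideal.span {q} * I with hEdef
    have hEmap : idealToSub R K E = Ebar := by
      rw [hEdef, idealToSub_sup, idealToSub_mul, idealToSub_span_singleton,
        idealToSub_span_singleton, ← hI'def, ← hp'def, ← hq'def, ← hPdef, ← hQqdef, ← hBdef]
    have hspan_ne : Ideal.span {p} ≠ (0 : Ideal R) := by
      simpa [Ideal.span_singleton_eq_bot] using hp0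
    have hE_ne : E ≠ 0 := fun h =>
      hspan_ne (le_bot_iff.mp (le_trans le_sup_left (le_of_eq h)))
    have hE_fg : E.FG :=
      Submodule.FG.sup (Submodule.fg_span_singleton p)
        (Submodule.FG.mul (Submodule.fg_span_singleton q) hIfg)
    have hprem : tI R K (Ideal.span {p} * E ^ n) = tI R K (E ^ (n + 1)) := by
      rw [tI_eq_vI (ideal_mul_ne_bot hspan_ne (ideal_pow_ne_bot hE_ne n))
          (Submodule.FG.mul (Submodule.fg_span_singleton p) (Submodule.FG.pow hE_fg n)),
        tI_eq_vI (ideal_pow_ne_bot hE_ne (n + 1)) (Submodule.FG.pow hE_fg (n + 1))]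
      unfold vI
      rw [idealToSub_mul, idealToSub_pow, hEmap, idealToSub_span_singleton, ← hp'def,
        ← hPdef, idealToSub_pow, hEmap]
      exact hEK
    have hconc := hbasic E hE_ne hE_fg (Ideal.span {p}) hspan_ne le_sup_left ⟨n, hprem⟩
    have hv : vS R K P = vS R K Ebar := by
      rw [tI_eq_vI hspan_ne (Submodule.fg_span_singleton p), tI_eq_vI hE_ne hE_fg] at hconc
      unfold vI at hconc
      rwa [idealToSub_span_singleton, ← hp'def, ← hPdef, hEmap] at hconc
    have hBP : B ≤ P := by
      calc B ≤ Ebar := le_sup_right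
        _ ≤ vS R K Ebar := le_vS _
        _ = vS R K P := hv.symm
        _ = P := vS_span_singleton hp'0
    have hqx : q' * x ∈ P :=
      hBP (Submodule.mul_mem_mul (Submodule.mem_span_singleton_self q') hx)
    obtain ⟨r, hr⟩ := Submodule.mem_span_singleton.mp hqx
    have h6 : y * x * p' = algebraMap R K r * p' := by
      calc y * x * p' = y * p' * x := by ring
        _ = q' * x := by rw [hy']
        _ = r • p' := hr.symm
        _ = algebraMap R K r * p' := Algebra.smul_def r p'
    have h7 : y * x = algebraMap R K r := mul_right_cancel₀ hp'0 h6
    rw [h7]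
    exact Submodule.mem_one.mpr ⟨r, rfl⟩
  unfold vI vS
  apply le_antisymm
  · exact oneDiv_anti (oneDiv_anti (Submodule.map_mono hJI))
  · exact oneDiv_anti hdiv
end
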